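/- Let G and H be non-complete disjoint graphs with |V(H)| ≥ 2, and let B ⊆ V(H). Then X = V(G) ∪ B is a mutual-visibility set of the join G ∨ H if and only if B = ∅, or the subgraph of H induced by B is a clique, or B is a mutual-visibility set in H with diam_H(B) = 2. -/

import Mathlib

open SimpleGraph Polynomial

/-- Two vertices `u`, `v` are `X`-visible in `G` if some shortest `u`\u2013`v` path
has no internal vertex in `X`. -/
def SimpleGraph.XVisible {V : Type*} (G : SimpleGraph V) (X : Set V) (u v : V) : Prop :=
  ∃ p : G.Walk u v, p.IsPath ∧ p.length = G.dist u v ∧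
    ∀ w ∈ p.support, w ∈ X → w = u ∨ w = v

/-- `X` is a mutual-visibility set of `G`. -/
def SimpleGraph.IsMutualVisibilitySet {V : Type*} (G : SimpleGraph V) (X : Set V) : Prop :=
  ∀ u ∈ X, ∀ v ∈ X, G.XVisible X u v


/-- The join `G ∨ H` of two graphs on disjoint vertex sets. -/
def graphJoin {α β : Type*} (G : SimpleGraph α) (H : SimpleGraph β) : SimpleGraph (α ⊕ β) :=
  SimpleGraph.fromRel (fun u v => match u, v with
    | Sum.inl a, Sum.inl b => G.Adj a b
    | Sum.inr a, Sum.inr b => H.Adj a b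
    | Sum.inl _, Sum.inr _ => True
    | Sum.inr _, Sum.inl _ => False)

/-- The diameter of a set of vertices: the largest distance in `H` between two of its members. -/
noncomputable def setDiam {β : Type*} (H : SimpleGraph β) (B : Set β) : ℕ :=
  sSup ((fun p : β × β => H.dist p.1 p.2) '' (B ×ˢ B))

section Aux

variable {V : Type*} {G : SimpleGraph V} {X : Set V} {u v w : V}

lemma xvisible_self (G : SimpleGraph V) (X : Set V) (u : V) : G.XVisible X u u :=
  ⟨SimpleGraph.Walk.nil, by simp, by simp [SimpleGraph.dist_self], by simp⟩

lemma xvisible_of_adj (h : G.Adj u v) : G.XVisible X u v :=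
  ⟨h.toWalk, by simp [h.ne], by simp [SimpleGraph.dist_eq_one_iff_adj.mpr h], by
    intro w hw _
    simpa using hw⟩

lemma dist_eq_two' (huv : u ≠ v) (hn : ¬ G.Adj u v) (h1 : G.Adj u w) (h2 : G.Adj w v) :
    G.dist u v = 2 := by
  have hle : G.dist u v ≤ 2 := by
    have := SimpleGraph.dist_le (SimpleGraph.Walk.cons h1 h2.toWalk)
    simpa using this
  have h0 : G.dist u v ≠ 0 := by
    rw [SimpleGraph.dist_ne_zero_iff_ne_and_reachable]
    exact ⟨huv, (SimpleGraph.Walk.cons h1 h2.toWalk).reachable⟩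
  have h1' : G.dist u v ≠ 1 := fun h => hn (SimpleGraph.dist_eq_one_iff_adj.mp h)
  omega

lemma xvisible_two (huv : u ≠ v) (hn : ¬G.Adj u v) (h1 : G.Adj u w) (h2 : G.Adj w v)
    (hw : w ∉ X) : G.XVisible X u v := by
  refine ⟨SimpleGraph.Walk.cons h1 h2.toWalk, ?_, ?_, ?_⟩
  · simp [SimpleGraph.Walk.isPath_def, h1.ne, h2.ne, huv]
  · simp [dist_eq_two' huv hn h1 h2]
  · intro x hx hxX
    simp only [SimpleGraph.Walk.support_cons, SimpleGraph.Adj.toWalk,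
      SimpleGraph.Walk.support_cons, SimpleGraph.Walk.support_nil, List.mem_cons,
      List.mem_singleton] at hx
    rcases hx with rfl | rfl | rfl | hx
    · exact Or.inl rfl
    · exact absurd hxX hw
    · exact Or.inr rfl
    · simp at hx

lemma exists_middle (hd : G.dist u v = 2) (hvis : G.XVisible X u v) :
    ∃ w, w ∉ X ∧ G.Adj u w ∧ G.Adj w v := by
  obtain ⟨p, hp, hlen, hsup⟩ := hvis
  rw [hd] at hlen
  cases p with
  | nil => simp at hlen
  | cons h q =>
    cases q with
    | nil => simp at hlen
    | cons h' q' =>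
      cases q' with
      | nil =>
        refine ⟨_, fun hw => ?_, h, h'⟩
        rcases hsup _ (by simp) hw with rfl | rfl
        · exact h.ne rfl
        · exact h'.ne rfl
      | cons h'' q'' =>
        simp [SimpleGraph.Walk.length_cons] at hlen

lemma XVisible.symm' (h : G.XVisible X u v) : G.XVisible X v u := by
  obtain ⟨p, hp, hlen, hsup⟩ := h
  refine ⟨p.reverse, hp.reverse, ?_, ?_⟩
  · rw [SimpleGraph.Walk.length_reverse, hlen, SimpleGraph.dist_comm]
  · intro w hw hX
    rw [SimpleGraph.Walk.support_reverse, List.mem_reverse] at hw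
    exact (hsup w hw hX).symm

lemma exists_non_adj (h : G ≠ ⊤) : ∃ a b, a ≠ b ∧ ¬ G.Adj a b := by
  by_contra hc
  push_neg at hc
  apply h
  ext a b
  simp only [SimpleGraph.top_adj]
  exact ⟨fun h' => h'.ne, fun hne => hc a b hne⟩

end Aux

section JoinAdj

variable {α β : Type*} {G : SimpleGraph α} {H : SimpleGraph β}

lemma join_adj_ll {a b : α} : (graphJoin G H).Adj (Sum.inl a) (Sum.inl b) ↔ G.Adj a b := by
  simp only [graphJoin, SimpleGraph.fromRel_adj]
  constructor
  · rintro ⟨h1, h2 | h2⟩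
    · exact h2
    · exact h2.symm
  · intro h
    exact ⟨by simpa using h.ne, Or.inl h⟩

lemma join_adj_rr {a b : β} : (graphJoin G H).Adj (Sum.inr a) (Sum.inr b) ↔ H.Adj a b := by
  simp only [graphJoin, SimpleGraph.fromRel_adj]
  constructor
  · rintro ⟨h1, h2 | h2⟩
    · exact h2
    · exact h2.symm
  · intro h
    exact ⟨by simpa using h.ne, Or.inl h⟩

lemma join_adj_lr {a : α} {b : β} : (graphJoin G H).Adj (Sum.inl a) (Sum.inr b) := by
  simp only [graphJoin, SimpleGraph.fromRel_adj]
  exact ⟨by simp, Or.inl trivial⟩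

lemma join_adj_rl {a : α} {b : β} : (graphJoin G H).Adj (Sum.inr b) (Sum.inl a) :=
  join_adj_lr.symm

end JoinAdj

theorem join_side_union_mv_iff {α β : Type*} [Fintype β]
    (G : SimpleGraph α) (H : SimpleGraph β)
    (hG : G ≠ ⊤) (hH : H ≠ ⊤) (hβ : 2 ≤ Fintype.card β) (B : Set β) :
    (graphJoin G H).IsMutualVisibilitySet (Sum.inl '' (Set.univ : Set α) ∪ Sum.inr '' B) ↔
      B = ∅ ∨ H.IsClique B ∨ (H.IsMutualVisibilitySet B ∧ setDiam H B = 2) := by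
  classical
  set X : Set (α ⊕ β) := Sum.inl '' (Set.univ : Set α) ∪ Sum.inr '' B with hXdef
  obtain ⟨a₁, a₂, _, _⟩ := exists_non_adj hG
  obtain ⟨b₁, b₂, hb12, hb12n⟩ := exists_non_adj hH
  have hXl : ∀ a : α, Sum.inl a ∈ X := fun a => Or.inl ⟨a, trivial, rfl⟩
  have hXr : ∀ b : β, (Sum.inr b ∈ X ↔ b ∈ B) := by
    intro b; simp [hXdef]
  constructor
  · intro hmv
    have key : ∀ b ∈ B, ∀ b' ∈ B, b ≠ b' → ¬ H.Adj b b' →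
        ∃ c, c ∉ B ∧ H.Adj b c ∧ H.Adj c b' := by
      intro b hb b' hb' hne hnadj
      have hd : (graphJoin G H).dist (Sum.inr b) (Sum.inr b') = 2 :=
        dist_eq_two' (by simp [hne]) (fun h => hnadj (join_adj_rr.1 h))
          (join_adj_rl (a := a₁)) (join_adj_lr (a := a₁))
      obtain ⟨w, hwX, h1, h2⟩ :=
        exists_middle hd (hmv _ ((hXr b).2 hb) _ ((hXr b').2 hb'))
      cases w with
      | inl a => exact absurd (hXl a) hwX
      | inr c =>
        exact ⟨c, fun hc => hwX ((hXr c).2 hc), join_adj_rr.1 h1, join_adj_rr.1 h2⟩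
    by_cases hB : B = ∅
    · exact Or.inl hB
    by_cases hclq : H.IsClique B
    · exact Or.inr (Or.inl hclq)
    right; right
    simp only [SimpleGraph.isClique_iff, Set.Pairwise] at hclq
    push_neg at hclq
    obtain ⟨b, hb, b', hb', hbb', hnadj⟩ := hclq
    obtain ⟨c, hc, hc1, hc2⟩ := key b hb b' hb' hbb' hnadj
    have hd2 : H.dist b b' = 2 := dist_eq_two' hbb' hnadj hc1 hc2
    have hle : ∀ x ∈ B, ∀ y ∈ B, H.dist x y ≤ 2 := by
      intro x hx y hy
      by_cases hxy : x = y
      · simp [hxy, SimpleGraph.dist_self]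
      by_cases hadj : H.Adj x y
      · rw [SimpleGraph.dist_eq_one_iff_adj.mpr hadj]; omega
      · obtain ⟨c', _, h1, h2⟩ := key x hx y hy hxy hadj
        rw [dist_eq_two' hxy hadj h1 h2]
    constructor
    · intro x hx y hy
      by_cases hxy : x = y
      · subst hxy; exact xvisible_self H B x
      by_cases hadj : H.Adj x y
      · exact xvisible_of_adj hadj
      · obtain ⟨c', hc', h1, h2⟩ := key x hx y hy hxy hadj
        exact xvisible_two hxy hadj h1 h2 hc'
    · unfold setDiam
      apply le_antisymm
      · refine csSup_le ⟨2, ⟨(b, b'), Set.mk_mem_prod hb hb', hd2⟩⟩ ?_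
        rintro n ⟨⟨x, y⟩, hxy, rfl⟩
        exact hle x hxy.1 y hxy.2
      · exact le_csSup (Set.Finite.bddAbove ((Set.toFinite _).image _))
          ⟨(b, b'), Set.mk_mem_prod hb hb', hd2⟩
  · intro hrhs
    -- in all three cases we produce a vertex outside `B` and a "middle vertex" function
    have hmain : (∃ c, c ∉ B) ∧ (∀ b ∈ B, ∀ b' ∈ B, b ≠ b' → ¬ H.Adj b b' →
        ∃ c, c ∉ B ∧ H.Adj b c ∧ H.Adj c b') := by
      rcases hrhs with rfl | hclq | ⟨hmvB, hdiam⟩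
      · exact ⟨⟨b₁, fun h => h⟩, fun b hb => absurd hb (fun h => h)⟩
      · refine ⟨?_, ?_⟩
        · by_cases h1 : b₁ ∈ B
          · refine ⟨b₂, fun h2 => hb12n (hclq h1 h2 hb12)⟩
          · exact ⟨b₁, h1⟩
        · intro b hb b' hb' hne hnadj
          exact absurd (hclq hb hb' hne) hnadj
      · have hmid : ∀ b ∈ B, ∀ b' ∈ B, b ≠ b' → ¬ H.Adj b b' →
            ∃ c, c ∉ B ∧ H.Adj b c ∧ H.Adj c b' := by
          intro b hb b' hb' hne hnadj
          have hle : H.dist b b' ≤ 2 := by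
            rw [← hdiam]
            exact le_csSup (Set.Finite.bddAbove ((Set.toFinite _).image _))
              ⟨(b, b'), Set.mk_mem_prod hb hb', rfl⟩
          have hd0 : H.dist b b' ≠ 0 := by
            obtain ⟨p, _, hlen, _⟩ := hmvB b hb b' hb'
            intro h0
            rw [h0] at hlen
            exact hne (SimpleGraph.Walk.eq_of_length_eq_zero hlen)
          have hd1 : H.dist b b' ≠ 1 := fun h => hnadj (SimpleGraph.dist_eq_one_iff_adj.mp h)
          have hd : H.dist b b' = 2 := by omega
          exact exists_middle hd (hmvB b hb b' hb')
        refine ⟨?_, hmid⟩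
        -- `setDiam = 2` forces a pair at distance 2, and mutual visibility gives c ∉ B
        have hSne : ((fun p : β × β => H.dist p.1 p.2) '' (B ×ˢ B)).Nonempty := by
          by_contra h
          rw [Set.not_nonempty_iff_eq_empty] at h
          rw [setDiam, h] at hdiam
          simp at hdiam
        have hmem := hSne.csSup_mem ((Set.toFinite _).image _)
        rw [← setDiam, hdiam] at hmem
        obtain ⟨⟨x, y⟩, hxy, hd0⟩ := hmem
        have hd : H.dist x y = 2 := hd0
        have hxy1 : x ∈ B := hxy.1
        have hxy2 : y ∈ B := hxy.2
        have hne : x ≠ y := by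
          intro h; rw [h, SimpleGraph.dist_self] at hd; omega
        have hnadj : ¬ H.Adj x y := by
          intro h; rw [SimpleGraph.dist_eq_one_iff_adj.mpr h] at hd; omega
        obtain ⟨c, hc, _, _⟩ := hmid x hxy1 y hxy2 hne hnadj
        exact ⟨c, hc⟩
    obtain ⟨⟨c₀, hc₀⟩, hmid⟩ := hmain
    -- now prove mutual visibility in the join
    intro u hu v hv
    cases u with
    | inl a =>
      cases v with
      | inl a' =>
        by_cases haa : a = a'
        · subst haa; exact xvisible_self _ _ _
        by_cases hadj : G.Adj a a'
        · exact xvisible_of_adj (join_adj_ll.2 hadj)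
        · refine xvisible_two (by simp [haa]) (fun h => hadj (join_adj_ll.1 h))
            (join_adj_lr (b := c₀)) (join_adj_rl (b := c₀)) ?_
          intro h
          rcases h with ⟨x, _, hx⟩ | ⟨x, hx1, hx2⟩
          · cases hx
          · rw [Sum.inr.injEq] at hx2
            exact hc₀ (hx2 ▸ hx1)
      | inr b => exact xvisible_of_adj join_adj_lr
    | inr b =>
      cases v with
      | inl a => exact xvisible_of_adj join_adj_rl
      | inr b' =>
        have hb : b ∈ B := (hXr b).1 hu
        have hb' : b' ∈ B := (hXr b').1 hv
        by_cases hbb : b = b'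
        · subst hbb; exact xvisible_self _ _ _
        by_cases hadj : H.Adj b b'
        · exact xvisible_of_adj (join_adj_rr.2 hadj)
        · obtain ⟨c, hc, h1, h2⟩ := hmid b hb b' hb' hbb hadj
          refine xvisible_two (by simp [hbb]) (fun h => hadj (join_adj_rr.1 h))
            (join_adj_rr.2 h1) (join_adj_rr.2 h2) ?_
          intro h
          rcases h with ⟨x, _, hx⟩ | ⟨x, hx1, hx2⟩
          · cases hx
          · rw [Sum.inr.injEq] at hx2
            exact hc (hx2 ▸ hx1)
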